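/- Let $p$ be a real-valued polynomial on $\mathbb{C}$, $A_{jk}(z) = \frac{1}{j!k!}\frac{\partial^{j+k}p(z)}{\partial z^j \partial \bar z^k}$, and define $\Lambda(z,\delta) = \sum_{j,k \ge 1} |A_{jk}(z)| \, \delta^{j+k}$ for $\delta > 0$. Then there exist constants $c, C > 0$ depending only on $\deg p$ such that for all $z, w \in \mathbb{C}$, $c\,\Lambda(w, |z-w|) \le \Lambda(z, |z-w|) \le C\, \Lambda(w, |z-w|)$. -/

import Mathlib

open Finset

/-- The Wirtinger derivative `∂/∂z` of a function `f : ℂ → ℂ`. -/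
noncomputable def WD (f : ℂ → ℂ) : ℂ → ℂ :=
  fun z => (fderiv ℝ f z 1 - Complex.I * fderiv ℝ f z Complex.I) / 2

/-- The Wirtinger derivative `∂/∂z̄` of a function `f : ℂ → ℂ`. -/
noncomputable def WDbar (f : ℂ → ℂ) : ℂ → ℂ :=
  fun z => (fderiv ℝ f z 1 + Complex.I * fderiv ℝ f z Complex.I) / 2

/-- The normalized mixed Taylor coefficient
`A_{jk}(z) = (1/(j! k!)) ∂^{j+k} p(z) / ∂z^j ∂z̄^k`. -/
noncomputable def Acoef (p : ℂ → ℂ) (j k : ℕ) (z : ℂ) : ℂ :=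
  (1 / ((Nat.factorial j : ℂ) * (Nat.factorial k : ℂ))) * (WD^[j] (WDbar^[k] p)) z

/-- `p` is a polynomial in `z` and `z̄` of degree at most `D` in each variable. -/
def IsCCPoly (p : ℂ → ℂ) (D : ℕ) : Prop :=
  ∃ a : ℕ → ℕ → ℂ, ∀ z : ℂ,
    p z = ∑ j ∈ range (D + 1), ∑ k ∈ range (D + 1), a j k * z ^ j * (starRingEnd ℂ z) ^ k

/-- `p` takes real values. -/
def IsRealValued (p : ℂ → ℂ) : Prop := ∀ z, (p z).im = 0

/-- The twist term `T(w,z) = -2 Im ∑_{j≥1} (1/j!) ∂^j p(z)/∂z^j (w-z)^j`. -/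
noncomputable def Ttwist (p : ℂ → ℂ) (D : ℕ) (w z : ℂ) : ℝ :=
  -2 * (∑ j ∈ Finset.Icc 1 D, Acoef p j 0 z * (w - z) ^ j).im

/-- `r(w,ξ,z) = 2 Im ∑_{j,k≥1} A_{jk}(ξ) (w-ξ)^j conj(z-ξ)^k`. -/
noncomputable def rtwist (p : ℂ → ℂ) (D : ℕ) (w ξ z : ℂ) : ℝ :=
  2 * (∑ j ∈ Finset.Icc 1 D, ∑ k ∈ Finset.Icc 1 D,
    Acoef p j k ξ * (w - ξ) ^ j * (starRingEnd ℂ (z - ξ)) ^ k).im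

/-- `e(w,ξ) = ∑_{j≥1} (1/j!) ∂^{j+1} p(ξ)/∂ξ^j ∂ξ̄ (w-ξ)^j`. -/
noncomputable def efun (p : ℂ → ℂ) (D : ℕ) (w ξ : ℂ) : ℂ :=
  ∑ j ∈ Finset.Icc 1 D, Acoef p j 1 ξ * (w - ξ) ^ j

/-- `Λ(z,δ) = ∑_{j,k ≥ 1} |A_{jk}(z)| δ^{j+k}`. -/
noncomputable def Lam (p : ℂ → ℂ) (D : ℕ) (z : ℂ) (δ : ℝ) : ℝ :=
  ∑ j ∈ Finset.Icc 1 D, ∑ k ∈ Finset.Icc 1 D, ‖Acoef p j k z‖ * δ ^ (j + k)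

/-- The weighted operator `Z_{τp} = ∂/∂z - τ (∂p/∂z)`. -/
noncomputable def Zop (p : ℂ → ℂ) (τ : ℝ) (f : ℂ → ℂ) : ℂ → ℂ :=
  fun z => WD f z - (τ : ℂ) * WD p z * f z

/-- The weighted operator `Z̄_{τp} = ∂/∂z̄ + τ (∂p/∂z̄)`. -/
noncomputable def Zbarop (p : ℂ → ℂ) (τ : ℝ) (f : ℂ → ℂ) : ℂ → ℂ :=
  fun z => WDbar f z + (τ : ℂ) * WDbar p z * f z

/-- The weighted Laplacian `□_{τp} = -Z̄_{τp} Z_{τp}`. -/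
noncomputable def BoxOp (p : ℂ → ℂ) (τ : ℝ) (f : ℂ → ℂ) : ℂ → ℂ :=
  fun z => -(Zbarop p τ (Zop p τ f) z)

/-- The twisted `τ`-derivative `M_{τp} = ∂/∂τ - i T(w,z)`, acting on functions of `(τ,z)`. -/
noncomputable def Mop (p : ℂ → ℂ) (D : ℕ) (w : ℂ) (F : ℝ → ℂ → ℂ) : ℝ → ℂ → ℂ :=
  fun τ z => deriv (fun σ => F σ z) τ - Complex.I * (Ttwist p D w z : ℂ) * F τ z

section AuxWirtinger

open Complex

/-- The real-Fréchet derivative of the monomial `z ^ m * conj z ^ n`. -/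
noncomputable def monoD (m n : ℕ) (z : ℂ) : ℂ →L[ℝ] ℂ :=
  ((m : ℂ) * z ^ (m - 1) * (starRingEnd ℂ z) ^ n) • (ContinuousLinearMap.id ℝ ℂ)
  + ((n : ℂ) * z ^ m * (starRingEnd ℂ z) ^ (n - 1)) • (Complex.conjCLE.toContinuousLinearMap)

lemma monoD_apply (m n : ℕ) (z v : ℂ) :
    monoD m n z v = (m : ℂ) * z ^ (m - 1) * (starRingEnd ℂ z) ^ n * v
      + (n : ℂ) * z ^ m * (starRingEnd ℂ z) ^ (n - 1) * (starRingEnd ℂ v) := by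
  simp [monoD, smul_eq_mul]

lemma hasFDerivAt_monoCC (m n : ℕ) (z : ℂ) :
    HasFDerivAt (fun z : ℂ => z ^ m * (starRingEnd ℂ z) ^ n) (monoD m n z) z := by
  have hconj : HasFDerivAt (fun w : ℂ => (starRingEnd ℂ) w)
      (Complex.conjCLE.toContinuousLinearMap) z :=
    (Complex.conjCLE.toContinuousLinearMap).hasFDerivAt
  have h1 : HasFDerivAt (fun w : ℂ => w ^ m)
      ((ContinuousLinearMap.smulRight (1 : ℂ →L[ℂ] ℂ) ((m : ℂ) * z ^ (m - 1))).restrictScalars ℝ) z :=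
    (hasDerivAt_pow m z).hasFDerivAt.restrictScalars ℝ
  have h2' : HasFDerivAt (fun w : ℂ => w ^ n)
      ((ContinuousLinearMap.smulRight (1 : ℂ →L[ℂ] ℂ)
        ((n : ℂ) * (starRingEnd ℂ z) ^ (n - 1))).restrictScalars ℝ) (starRingEnd ℂ z) :=
    (hasDerivAt_pow n (starRingEnd ℂ z)).hasFDerivAt.restrictScalars ℝ
  have h2 : HasFDerivAt (fun w : ℂ => (starRingEnd ℂ w) ^ n)
      (((ContinuousLinearMap.smulRight (1 : ℂ →L[ℂ] ℂ)
        ((n : ℂ) * (starRingEnd ℂ z) ^ (n - 1))).restrictScalars ℝ).comp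
        (Complex.conjCLE.toContinuousLinearMap)) z := h2'.comp z hconj
  have h := h1.mul h2
  have heq : monoD m n z =
      z ^ m • (((ContinuousLinearMap.smulRight (1 : ℂ →L[ℂ] ℂ)
        ((n : ℂ) * (starRingEnd ℂ z) ^ (n - 1))).restrictScalars ℝ).comp
        (Complex.conjCLE.toContinuousLinearMap))
      + (starRingEnd ℂ z) ^ n •
        ((ContinuousLinearMap.smulRight (1 : ℂ →L[ℂ] ℂ) ((m : ℂ) * z ^ (m - 1))).restrictScalars ℝ) := by
    ext v
    simp [monoD, smul_eq_mul]
    ring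
  rw [heq]
  exact h

lemma hasFDerivAt_sumCC {ι : Type*} (s : Finset ι) (c : ι → ℂ) (a b : ι → ℕ) (z : ℂ) :
    HasFDerivAt (fun z : ℂ => ∑ i ∈ s, c i * z ^ a i * (starRingEnd ℂ z) ^ b i)
      (∑ i ∈ s, c i • monoD (a i) (b i) z) z := by
  have h : HasFDerivAt (fun z : ℂ => ∑ i ∈ s, c i * (z ^ a i * (starRingEnd ℂ z) ^ b i))
      (∑ i ∈ s, c i • monoD (a i) (b i) z) z :=
    HasFDerivAt.fun_sum fun i _ => (hasFDerivAt_monoCC (a i) (b i) z).const_mul (c i)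
  simpa only [mul_assoc] using h

lemma WD_sumCC {ι : Type*} (s : Finset ι) (c : ι → ℂ) (a b : ι → ℕ) :
    WD (fun z : ℂ => ∑ i ∈ s, c i * z ^ a i * (starRingEnd ℂ z) ^ b i)
      = fun z => ∑ i ∈ s, c i * (a i : ℂ) * z ^ (a i - 1) * (starRingEnd ℂ z) ^ b i := by
  funext z
  have h := (hasFDerivAt_sumCC s c a b z).fderiv
  simp only [WD, h, ContinuousLinearMap.sum_apply, ContinuousLinearMap.smul_apply,
    monoD_apply, smul_eq_mul, map_one, Complex.conj_I, Finset.mul_sum,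
    ← Finset.sum_sub_distrib, Finset.sum_div]
  refine Finset.sum_congr rfl fun i _ => ?_
  have hI : (Complex.I : ℂ) * Complex.I = -1 := Complex.I_mul_I
  field_simp
  ring_nf
  rw [Complex.I_sq]
  ring

lemma WDbar_sumCC {ι : Type*} (s : Finset ι) (c : ι → ℂ) (a b : ι → ℕ) :
    WDbar (fun z : ℂ => ∑ i ∈ s, c i * z ^ a i * (starRingEnd ℂ z) ^ b i)
      = fun z => ∑ i ∈ s, c i * (b i : ℂ) * z ^ a i * (starRingEnd ℂ z) ^ (b i - 1) := by
  funext z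
  have h := (hasFDerivAt_sumCC s c a b z).fderiv
  simp only [WDbar, h, ContinuousLinearMap.sum_apply, ContinuousLinearMap.smul_apply,
    monoD_apply, smul_eq_mul, map_one, Complex.conj_I, Finset.mul_sum,
    ← Finset.sum_add_distrib, Finset.sum_div]
  refine Finset.sum_congr rfl fun i _ => ?_
  field_simp
  ring_nf
  rw [Complex.I_sq]
  ring

end AuxWirtinger
section AuxIter

open Complex

lemma WD_iter_sumCC {ι : Type*} (s : Finset ι) (c : ι → ℂ) (a b : ι → ℕ) (j : ℕ) :
    WD^[j] (fun z : ℂ => ∑ i ∈ s, c i * z ^ a i * (starRingEnd ℂ z) ^ b i)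
      = fun z => ∑ i ∈ s, c i * ((a i).descFactorial j : ℂ) * z ^ (a i - j)
          * (starRingEnd ℂ z) ^ b i := by
  induction j with
  | zero => simp
  | succ j ih =>
    rw [Function.iterate_succ_apply', ih,
      WD_sumCC s (fun i => c i * ((a i).descFactorial j : ℂ)) (fun i => a i - j) b]
    funext z
    refine Finset.sum_congr rfl fun i _ => ?_
    have h1 : ((a i).descFactorial (j + 1) : ℂ) = ((a i).descFactorial j : ℂ) * ((a i - j : ℕ) : ℂ) := by
      rw [Nat.descFactorial_succ]; push_cast; ring
    have h2 : a i - j - 1 = a i - (j + 1) := by omega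
    rw [h1, h2]; ring

lemma WDbar_iter_sumCC {ι : Type*} (s : Finset ι) (c : ι → ℂ) (a b : ι → ℕ) (k : ℕ) :
    WDbar^[k] (fun z : ℂ => ∑ i ∈ s, c i * z ^ a i * (starRingEnd ℂ z) ^ b i)
      = fun z => ∑ i ∈ s, c i * ((b i).descFactorial k : ℂ) * z ^ a i
          * (starRingEnd ℂ z) ^ (b i - k) := by
  induction k with
  | zero => simp
  | succ k ih =>
    rw [Function.iterate_succ_apply', ih,
      WDbar_sumCC s (fun i => c i * ((b i).descFactorial k : ℂ)) a (fun i => b i - k)]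
    funext z
    refine Finset.sum_congr rfl fun i _ => ?_
    have h1 : ((b i).descFactorial (k + 1) : ℂ) = ((b i).descFactorial k : ℂ) * ((b i - k : ℕ) : ℂ) := by
      rw [Nat.descFactorial_succ]; push_cast; ring
    have h2 : b i - k - 1 = b i - (k + 1) := by omega
    rw [h1, h2]; ring

lemma Acoef_eq {p : ℂ → ℂ} {D : ℕ} {a : ℕ → ℕ → ℂ}
    (hp : ∀ z : ℂ, p z = ∑ j ∈ Finset.range (D + 1), ∑ k ∈ Finset.range (D + 1),
      a j k * z ^ j * (starRingEnd ℂ z) ^ k) (j k : ℕ) (z : ℂ) :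
    Acoef p j k z = ∑ r ∈ Finset.range (D + 1) ×ˢ Finset.range (D + 1),
      a r.1 r.2 * ((r.1.choose j : ℂ) * (r.2.choose k : ℂ)) * z ^ (r.1 - j)
        * (starRingEnd ℂ z) ^ (r.2 - k) := by
  have hpf : p = fun z => ∑ r ∈ Finset.range (D + 1) ×ˢ Finset.range (D + 1),
      a r.1 r.2 * z ^ r.1 * (starRingEnd ℂ z) ^ r.2 := by
    funext z
    rw [hp z, Finset.sum_product]
  rw [Acoef, hpf,
    WDbar_iter_sumCC (Finset.range (D + 1) ×ˢ Finset.range (D + 1))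
      (fun r => a r.1 r.2) (fun r => r.1) (fun r => r.2) k,
    WD_iter_sumCC (Finset.range (D + 1) ×ˢ Finset.range (D + 1))
      (fun r => a r.1 r.2 * ((r.2).descFactorial k : ℂ)) (fun r => r.1) (fun r => r.2 - k) j,
    Finset.mul_sum]
  refine Finset.sum_congr rfl fun r _ => ?_
  have h1 : ((r.1.descFactorial j : ℕ) : ℂ) = (j.factorial : ℂ) * (r.1.choose j : ℂ) := by
    rw [Nat.descFactorial_eq_factorial_mul_choose]; push_cast; ring
  have h2 : ((r.2.descFactorial k : ℕ) : ℂ) = (k.factorial : ℂ) * (r.2.choose k : ℂ) := by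
    rw [Nat.descFactorial_eq_factorial_mul_choose]; push_cast; ring
  have hj : (j.factorial : ℂ) ≠ 0 := Nat.cast_ne_zero.mpr j.factorial_ne_zero
  have hk : (k.factorial : ℂ) ≠ 0 := Nat.cast_ne_zero.mpr k.factorial_ne_zero
  rw [h1, h2]
  field_simp

end AuxIter
section AuxReexp

open Complex

lemma binom_collapse (D s j : ℕ) (hs : s < D + 1) (u w : ℂ) :
    ∑ m ∈ Finset.range (D + 1), (s.choose m : ℂ) * (m.choose j : ℂ) * w ^ (s - m) * u ^ (m - j)
      = (s.choose j : ℂ) * (u + w) ^ (s - j) := by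
  rcases le_or_gt j s with hj | hj
  · have h1 : ∑ m ∈ Finset.range (D + 1),
        (s.choose m : ℂ) * (m.choose j : ℂ) * w ^ (s - m) * u ^ (m - j)
        = ∑ m ∈ Finset.Ico j (s + 1),
        (s.choose m : ℂ) * (m.choose j : ℂ) * w ^ (s - m) * u ^ (m - j) := by
      refine (Finset.sum_subset ?_ ?_).symm
      · intro x hx
        simp only [Finset.mem_Ico, Finset.mem_range] at hx ⊢
        omega
      · intro x hx hx'
        simp only [Finset.mem_Ico, Finset.mem_range] at hx hx'
        rcases lt_or_ge s x with h | h
        · simp [Nat.choose_eq_zero_of_lt h]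
        · have : x < j := by omega
          simp [Nat.choose_eq_zero_of_lt this]
    rw [h1, Finset.sum_Ico_eq_sum_range]
    have h2 : s + 1 - j = (s - j) + 1 := by omega
    rw [h2]
    have h3 : ∀ i ∈ Finset.range ((s - j) + 1),
        (s.choose (j + i) : ℂ) * ((j + i).choose j : ℂ) * w ^ (s - (j + i)) * u ^ (j + i - j)
        = (s.choose j : ℂ) * (((s - j).choose i : ℂ) * u ^ i * w ^ (s - j - i)) := by
      intro i hi
      simp only [Finset.mem_range] at hi
      have hji : j + i ≤ s := by omega
      have hcc : s.choose (j + i) * (j + i).choose j = s.choose j * (s - j).choose (j + i - j) :=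
        Nat.choose_mul (Nat.le_add_right j i)
      have hcast : (s.choose (j + i) : ℂ) * ((j + i).choose j : ℂ)
          = (s.choose j : ℂ) * ((s - j).choose i : ℂ) := by
        have := congrArg (fun x : ℕ => (x : ℂ)) hcc
        push_cast at this
        simpa [Nat.add_sub_cancel_left] using this
      have he1 : j + i - j = i := by omega
      have he2 : s - (j + i) = s - j - i := by omega
      rw [he1, he2, ← mul_assoc, ← mul_assoc] at *
      rw [hcast]
      ring
    rw [Finset.sum_congr rfl h3, ← Finset.mul_sum, add_pow]
    congr 1
    refine Finset.sum_congr rfl fun i _ => ?_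
    ring
  · have h0 : ∀ m ∈ Finset.range (D + 1),
        (s.choose m : ℂ) * (m.choose j : ℂ) * w ^ (s - m) * u ^ (m - j) = 0 := by
      intro m _
      rcases le_or_gt m s with h | h
      · have : m < j := by omega
        simp [Nat.choose_eq_zero_of_lt this]
      · simp [Nat.choose_eq_zero_of_lt h]
    rw [Finset.sum_eq_zero h0, Nat.choose_eq_zero_of_lt hj]
    simp

lemma Acoef_reexpand {p : ℂ → ℂ} {D : ℕ} {a : ℕ → ℕ → ℂ}
    (hp : ∀ z : ℂ, p z = ∑ j ∈ Finset.range (D + 1), ∑ k ∈ Finset.range (D + 1),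
      a j k * z ^ j * (starRingEnd ℂ z) ^ k) (j k : ℕ) (z w : ℂ) :
    Acoef p j k z = ∑ r ∈ Finset.range (D + 1) ×ˢ Finset.range (D + 1),
      Acoef p r.1 r.2 w * ((r.1.choose j : ℂ) * (r.2.choose k : ℂ)) * (z - w) ^ (r.1 - j)
        * (starRingEnd ℂ (z - w)) ^ (r.2 - k) := by
  set R2 := Finset.range (D + 1) ×ˢ Finset.range (D + 1) with hR2
  have key : ∀ r ∈ R2, Acoef p r.1 r.2 w * ((r.1.choose j : ℂ) * (r.2.choose k : ℂ))
      * (z - w) ^ (r.1 - j) * (starRingEnd ℂ (z - w)) ^ (r.2 - k)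
      = ∑ q ∈ R2, a q.1 q.2 *
          ((q.1.choose r.1 : ℂ) * (r.1.choose j : ℂ) * w ^ (q.1 - r.1) * (z - w) ^ (r.1 - j)) *
          ((q.2.choose r.2 : ℂ) * (r.2.choose k : ℂ) * (starRingEnd ℂ w) ^ (q.2 - r.2)
            * (starRingEnd ℂ (z - w)) ^ (r.2 - k)) := by
    intro r _
    rw [Acoef_eq hp r.1 r.2 w, Finset.sum_mul, Finset.sum_mul, Finset.sum_mul]
    refine Finset.sum_congr rfl fun q _ => ?_
    ring
  rw [Finset.sum_congr rfl key, Finset.sum_comm]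
  rw [Acoef_eq hp j k z]
  refine Finset.sum_congr rfl fun q hq => ?_
  have hq1 : q.1 < D + 1 := by
    rw [hR2] at hq
    exact (Finset.mem_range.mp (Finset.mem_product.mp hq).1)
  have hq2 : q.2 < D + 1 := by
    rw [hR2] at hq
    exact (Finset.mem_range.mp (Finset.mem_product.mp hq).2)
  have hfac : ∑ r ∈ R2, a q.1 q.2 *
      ((q.1.choose r.1 : ℂ) * (r.1.choose j : ℂ) * w ^ (q.1 - r.1) * (z - w) ^ (r.1 - j)) *
      ((q.2.choose r.2 : ℂ) * (r.2.choose k : ℂ) * (starRingEnd ℂ w) ^ (q.2 - r.2)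
        * (starRingEnd ℂ (z - w)) ^ (r.2 - k))
      = a q.1 q.2 *
        (∑ m ∈ Finset.range (D + 1),
          (q.1.choose m : ℂ) * (m.choose j : ℂ) * w ^ (q.1 - m) * (z - w) ^ (m - j)) *
        (∑ n ∈ Finset.range (D + 1),
          (q.2.choose n : ℂ) * (n.choose k : ℂ) * (starRingEnd ℂ w) ^ (q.2 - n)
            * (starRingEnd ℂ (z - w)) ^ (n - k)) := by
    rw [hR2, Finset.sum_product]
    conv_rhs => rw [mul_assoc, Finset.sum_mul_sum, Finset.mul_sum]
    refine Finset.sum_congr rfl fun m _ => ?_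
    rw [Finset.mul_sum]
    refine Finset.sum_congr rfl fun n _ => ?_
    ring
  rw [hfac, binom_collapse D q.1 j hq1 (z - w) w, binom_collapse D q.2 k hq2
    (starRingEnd ℂ (z - w)) (starRingEnd ℂ w)]
  have e1 : z - w + w = z := by ring
  have e2 : starRingEnd ℂ (z - w) + starRingEnd ℂ w = starRingEnd ℂ z := by
    rw [← map_add]; ring_nf
  rw [e1, e2]
  ring

end AuxReexp
section AuxFinal

open Complex

lemma choose_le_two_pow' (m j : ℕ) : m.choose j ≤ 2 ^ m := by
  rcases le_or_gt j m with h | h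
  · calc m.choose j ≤ ∑ i ∈ Finset.range (m + 1), m.choose i :=
        Finset.single_le_sum (fun i _ => Nat.zero_le _) (Finset.mem_range.mpr (by omega))
      _ = 2 ^ m := Nat.sum_range_choose m
  · simp [Nat.choose_eq_zero_of_lt h]

lemma Lam_nonneg (p : ℂ → ℂ) (D : ℕ) (x : ℂ) (δ : ℝ) (hδ : 0 ≤ δ) : 0 ≤ Lam p D x δ :=
  Finset.sum_nonneg fun _ _ => Finset.sum_nonneg fun _ _ =>
    mul_nonneg (norm_nonneg _) (pow_nonneg hδ _)

lemma Acoef_abs_bound {p : ℂ → ℂ} {D : ℕ} {a : ℕ → ℕ → ℂ}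
    (hp : ∀ z : ℂ, p z = ∑ j ∈ Finset.range (D + 1), ∑ k ∈ Finset.range (D + 1),
      a j k * z ^ j * (starRingEnd ℂ z) ^ k) (j k : ℕ) (z w : ℂ) :
    ‖Acoef p j k z‖ * ‖z - w‖ ^ (j + k)
      ≤ ∑ r ∈ Finset.range (D + 1) ×ˢ Finset.range (D + 1),
          (r.1.choose j : ℝ) * (r.2.choose k : ℝ) * ‖Acoef p r.1 r.2 w‖
            * ‖z - w‖ ^ (r.1 + r.2) := by
  set δ := ‖z - w‖ with hδdef
  have hδ : 0 ≤ δ := norm_nonneg _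
  have h1 : ‖Acoef p j k z‖
      ≤ ∑ r ∈ Finset.range (D + 1) ×ˢ Finset.range (D + 1),
          (r.1.choose j : ℝ) * (r.2.choose k : ℝ) * ‖Acoef p r.1 r.2 w‖
            * δ ^ (r.1 - j) * δ ^ (r.2 - k) := by
    rw [Acoef_reexpand hp j k z w]
    refine le_trans (norm_sum_le _ _) (le_of_eq (Finset.sum_congr rfl fun r _ => ?_))
    rw [norm_mul, norm_mul, norm_mul, norm_pow, norm_pow, norm_mul, Complex.norm_conj]
    simp only [Complex.norm_natCast, ← hδdef]
    ring
  calc ‖Acoef p j k z‖ * δ ^ (j + k)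
      ≤ (∑ r ∈ Finset.range (D + 1) ×ˢ Finset.range (D + 1),
          (r.1.choose j : ℝ) * (r.2.choose k : ℝ) * ‖Acoef p r.1 r.2 w‖
            * δ ^ (r.1 - j) * δ ^ (r.2 - k)) * δ ^ (j + k) :=
        mul_le_mul_of_nonneg_right h1 (pow_nonneg hδ _)
    _ = ∑ r ∈ Finset.range (D + 1) ×ˢ Finset.range (D + 1),
          (r.1.choose j : ℝ) * (r.2.choose k : ℝ) * ‖Acoef p r.1 r.2 w‖
            * δ ^ (r.1 - j) * δ ^ (r.2 - k) * δ ^ (j + k) := Finset.sum_mul _ _ _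
    _ ≤ ∑ r ∈ Finset.range (D + 1) ×ˢ Finset.range (D + 1),
          (r.1.choose j : ℝ) * (r.2.choose k : ℝ) * ‖Acoef p r.1 r.2 w‖
            * δ ^ (r.1 + r.2) := by
        refine Finset.sum_le_sum fun r _ => ?_
        by_cases hjk : j ≤ r.1 ∧ k ≤ r.2
        · refine le_of_eq ?_
          have he : δ ^ (r.1 - j) * δ ^ (r.2 - k) * δ ^ (j + k) = δ ^ (r.1 + r.2) := by
            rw [← pow_add, ← pow_add]
            congr 1
            omega
          calc (r.1.choose j : ℝ) * (r.2.choose k : ℝ) * ‖Acoef p r.1 r.2 w‖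
                * δ ^ (r.1 - j) * δ ^ (r.2 - k) * δ ^ (j + k)
              = (r.1.choose j : ℝ) * (r.2.choose k : ℝ) * ‖Acoef p r.1 r.2 w‖
                * (δ ^ (r.1 - j) * δ ^ (r.2 - k) * δ ^ (j + k)) := by ring
            _ = _ := by rw [he]
        · rcases not_and_or.mp hjk with h | h
          · simp [Nat.choose_eq_zero_of_lt (show r.1 < j by omega)]
          · simp [Nat.choose_eq_zero_of_lt (show r.2 < k by omega)]

lemma Lam_le_aux {p : ℂ → ℂ} {D : ℕ} {a : ℕ → ℕ → ℂ}
    (hp : ∀ z : ℂ, p z = ∑ j ∈ Finset.range (D + 1), ∑ k ∈ Finset.range (D + 1),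
      a j k * z ^ j * (starRingEnd ℂ z) ^ k) (z w : ℂ) :
    Lam p D z (‖z - w‖)
      ≤ ((D : ℝ) * D * (2 ^ D * 2 ^ D)) * Lam p D w (‖z - w‖) := by
  set δ := ‖z - w‖ with hδdef
  have hδ : 0 ≤ δ := norm_nonneg _
  have hQz : Lam p D z δ = ∑ q ∈ Finset.Icc 1 D ×ˢ Finset.Icc 1 D,
      ‖Acoef p q.1 q.2 z‖ * δ ^ (q.1 + q.2) := by
    rw [Lam, ← Finset.sum_product']
  have hQw : Lam p D w δ = ∑ q ∈ Finset.Icc 1 D ×ˢ Finset.Icc 1 D,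
      ‖Acoef p q.1 q.2 w‖ * δ ^ (q.1 + q.2) := by
    rw [Lam, ← Finset.sum_product']
  rw [hQz, hQw]
  calc ∑ q ∈ Finset.Icc 1 D ×ˢ Finset.Icc 1 D, ‖Acoef p q.1 q.2 z‖ * δ ^ (q.1 + q.2)
      ≤ ∑ q ∈ Finset.Icc 1 D ×ˢ Finset.Icc 1 D,
          ∑ r ∈ Finset.range (D + 1) ×ˢ Finset.range (D + 1),
          (r.1.choose q.1 : ℝ) * (r.2.choose q.2 : ℝ) * ‖Acoef p r.1 r.2 w‖
            * δ ^ (r.1 + r.2) :=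
        Finset.sum_le_sum fun q _ => Acoef_abs_bound hp q.1 q.2 z w
    _ = ∑ r ∈ Finset.range (D + 1) ×ˢ Finset.range (D + 1),
          ∑ q ∈ Finset.Icc 1 D ×ˢ Finset.Icc 1 D,
          (r.1.choose q.1 : ℝ) * (r.2.choose q.2 : ℝ) * ‖Acoef p r.1 r.2 w‖
            * δ ^ (r.1 + r.2) := Finset.sum_comm
    _ = ∑ r ∈ Finset.Icc 1 D ×ˢ Finset.Icc 1 D,
          ∑ q ∈ Finset.Icc 1 D ×ˢ Finset.Icc 1 D,
          (r.1.choose q.1 : ℝ) * (r.2.choose q.2 : ℝ) * ‖Acoef p r.1 r.2 w‖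
            * δ ^ (r.1 + r.2) := by
        refine (Finset.sum_subset ?_ ?_).symm
        · intro x hx
          simp only [Finset.mem_product, Finset.mem_Icc, Finset.mem_range] at hx ⊢
          omega
        · intro r hr hr'
          simp only [Finset.mem_product, Finset.mem_Icc, Finset.mem_range] at hr hr'
          have hzero : r.1 = 0 ∨ r.2 = 0 := by omega
          refine Finset.sum_eq_zero fun q hq => ?_
          simp only [Finset.mem_product, Finset.mem_Icc] at hq
          rcases hzero with h | h
          · simp [Nat.choose_eq_zero_of_lt (show r.1 < q.1 by omega)]
          · simp [Nat.choose_eq_zero_of_lt (show r.2 < q.2 by omega)]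
    _ ≤ ∑ r ∈ Finset.Icc 1 D ×ˢ Finset.Icc 1 D,
          ((D : ℝ) * D * (2 ^ D * 2 ^ D)) *
            (‖Acoef p r.1 r.2 w‖ * δ ^ (r.1 + r.2)) := by
        refine Finset.sum_le_sum fun r hr => ?_
        simp only [Finset.mem_product, Finset.mem_Icc] at hr
        have step1 : ∑ q ∈ Finset.Icc 1 D ×ˢ Finset.Icc 1 D,
            (r.1.choose q.1 : ℝ) * (r.2.choose q.2 : ℝ) * ‖Acoef p r.1 r.2 w‖
              * δ ^ (r.1 + r.2)
            = (∑ q ∈ Finset.Icc 1 D ×ˢ Finset.Icc 1 D,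
                (r.1.choose q.1 : ℝ) * (r.2.choose q.2 : ℝ)) *
              (‖Acoef p r.1 r.2 w‖ * δ ^ (r.1 + r.2)) := by
          rw [Finset.sum_mul]
          exact Finset.sum_congr rfl fun q _ => by ring
        rw [step1]
        refine mul_le_mul_of_nonneg_right ?_
          (mul_nonneg (norm_nonneg _) (pow_nonneg hδ _))
        have hcard : (Finset.Icc 1 D ×ˢ Finset.Icc 1 D).card = D * D := by
          rw [Finset.card_product, Nat.card_Icc]
          simp
        calc ∑ q ∈ Finset.Icc 1 D ×ˢ Finset.Icc 1 D,
              (r.1.choose q.1 : ℝ) * (r.2.choose q.2 : ℝ)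
            ≤ (Finset.Icc 1 D ×ˢ Finset.Icc 1 D).card • ((2 : ℝ) ^ D * 2 ^ D) := by
              refine Finset.sum_le_card_nsmul _ _ _ fun q _ => ?_
              have b1 : (r.1.choose q.1 : ℝ) ≤ 2 ^ D := by
                have := le_trans (choose_le_two_pow' r.1 q.1)
                  (Nat.pow_le_pow_right (by norm_num) hr.1.2)
                exact_mod_cast this
              have b2 : (r.2.choose q.2 : ℝ) ≤ 2 ^ D := by
                have := le_trans (choose_le_two_pow' r.2 q.2)
                  (Nat.pow_le_pow_right (by norm_num) hr.2.2)
                exact_mod_cast this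
              have hn1 : (0:ℝ) ≤ (r.1.choose q.1 : ℝ) := Nat.cast_nonneg _
              have hn2 : (0:ℝ) ≤ (r.2.choose q.2 : ℝ) := Nat.cast_nonneg _
              nlinarith
          _ = (D : ℝ) * D * (2 ^ D * 2 ^ D) := by
              rw [hcard, nsmul_eq_mul]
              push_cast
              ring
    _ = ((D : ℝ) * D * (2 ^ D * 2 ^ D)) *
          ∑ r ∈ Finset.Icc 1 D ×ˢ Finset.Icc 1 D,
            ‖Acoef p r.1 r.2 w‖ * δ ^ (r.1 + r.2) := by
        rw [Finset.mul_sum]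

end AuxFinal
/-- For a real-valued polynomial `p` of degree at most `D`, the quantities
`Λ(z,|z-w|)` and `Λ(w,|z-w|)` are comparable, with constants depending only on `D`. -/
theorem Lam_comparable (D : ℕ) :
    ∃ c C : ℝ, 0 < c ∧ 0 < C ∧
      ∀ p : ℂ → ℂ, IsCCPoly p D → IsRealValued p → ∀ z w : ℂ,
        c * Lam p D w (‖z - w‖) ≤ Lam p D z (‖z - w‖) ∧
        Lam p D z (‖z - w‖) ≤ C * Lam p D w (‖z - w‖) := by
  set K : ℝ := (D : ℝ) * D * (2 ^ D * 2 ^ D) with hK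
  have hK0 : 0 ≤ K := by positivity
  refine ⟨1 / (K + 1), K + 1, by positivity, by positivity, ?_⟩
  intro p hp _ z w
  obtain ⟨a, ha⟩ := hp
  have hδ : 0 ≤ ‖z - w‖ := norm_nonneg _
  have h1 := Lam_le_aux ha z w
  have h2 := Lam_le_aux ha w z
  rw [norm_sub_rev w z] at h2
  have hLz := Lam_nonneg p D z (‖z - w‖) hδ
  have hLw := Lam_nonneg p D w (‖z - w‖) hδ
  rw [← hK] at h1 h2
  constructor
  · rw [div_mul_eq_mul_div, div_le_iff₀ (by positivity)]
    nlinarith [h2, hLz]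
  · nlinarith [h1, hLw]
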